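/- Consider a database D, a canonical set Σ of FDs with an LHS chain, and an SJFCQ Q. Then rfreq(Q, D \ D_conf^{Σ,Q}, Σ) = rfreq(Q, D \ (D_conf^{Σ,Q} ∪ D_ind^{Σ,Q}), Σ). -/

import Mathlib

open scoped Classical

/-- A fact over relation name `rel`, assigning a constant to each attribute. -/
structure DBFact (Rel Attr Const : Type*) where
  rel : Rel
  val : Attr → Const

/-- A functional dependency `rel : lhs → rhs`. -/
structure DBFD (Rel Attr : Type*) where
  rel : Rel
  lhs : Set Attr
  rhs : Set Attr

/-- A term of a conjunctive query: a variable or a constant. -/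
inductive DBTerm (Var Const : Type*) where
  | var : Var → DBTerm Var Const
  | const : Const → DBTerm Var Const

/-- An atom of a conjunctive query. -/
structure DBAtom (Rel Attr Var Const : Type*) where
  rel : Rel
  val : Attr → DBTerm Var Const

variable {Rel Attr Var Const : Type*}

/-- A database satisfies a single FD. -/
def satFD (D : Finset (DBFact Rel Attr Const)) (φ : DBFD Rel Attr) : Prop :=
  ∀ f ∈ D, ∀ g ∈ D, f.rel = φ.rel → g.rel = φ.rel →
    (∀ A ∈ φ.lhs, f.val A = g.val A) → ∀ A ∈ φ.rhs, f.val A = g.val A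

/-- A database satisfies a set of FDs. -/
def satFDs (D : Finset (DBFact Rel Attr Const)) (S : Set (DBFD Rel Attr)) : Prop :=
  ∀ φ ∈ S, satFD D φ

/-- `E` is a repair of `D` w.r.t. `S`: an inclusion-maximal consistent subset of `D`. -/
def isRepair (S : Set (DBFD Rel Attr)) (D E : Finset (DBFact Rel Attr Const)) : Prop :=
  E ⊆ D ∧ satFDs E S ∧ ∀ F, E ⊆ F → F ⊆ D → satFDs F S → F = E

/-- The set of repairs of `D` w.r.t. `S`. -/
noncomputable def rep (D : Finset (DBFact Rel Attr Const)) (S : Set (DBFD Rel Attr)) :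
    Finset (Finset (DBFact Rel Attr Const)) :=
  D.powerset.filter (fun E => isRepair S D E)

/-- Applying a homomorphism (a map from variables to constants) to an atom yields a fact. -/
def applyHom (h : Var → Const) (α : DBAtom Rel Attr Var Const) : DBFact Rel Attr Const :=
  ⟨α.rel, fun A => match α.val A with
    | DBTerm.var v => h v
    | DBTerm.const c => c⟩

/-- `D ⊨ Q`: there is a homomorphism from the CQ `Q` into `D`. -/
def entails (D : Finset (DBFact Rel Attr Const)) (Q : Finset (DBAtom Rel Attr Var Const)) :
    Prop :=
  ∃ h : Var → Const, ∀ α ∈ Q, applyHom h α ∈ D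

/-- The repairs of `D` w.r.t. `S` that entail `Q`. -/
noncomputable def repQ (D : Finset (DBFact Rel Attr Const)) (S : Set (DBFD Rel Attr))
    (Q : Finset (DBAtom Rel Attr Var Const)) : Finset (Finset (DBFact Rel Attr Const)) :=
  (rep D S).filter (fun E => entails E Q)

/-- The relative frequency of `Q` w.r.t. `D` and `S`. -/
noncomputable def rfreq (Q : Finset (DBAtom Rel Attr Var Const))
    (D : Finset (DBFact Rel Attr Const)) (S : Set (DBFD Rel Attr)) : ℚ :=
  ((repQ D S Q).card : ℚ) / ((rep D S).card : ℚ)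

/-- `Q` is self-join-free: no relation name occurs in two distinct atoms. -/
def sjf (Q : Finset (DBAtom Rel Attr Var Const)) : Prop :=
  ∀ α ∈ Q, ∀ β ∈ Q, α.rel = β.rel → α = β

/-- A canonical set of FDs with an LHS chain, given by the chain
`R : X₁ → Y₁, …, R : Xₙ → Yₙ` for each relation name `R`, with
`X₁ ⊊ X₂ ⊊ ⋯ ⊊ Xₙ`, each `Y_i` nonempty, `X_i ∩ Y_j = ∅` for all `i,j`,
and `Y_i ∩ Y_j = ∅` for `i ≠ j`. -/
def canonicalChain (chain : Rel → List (Set Attr × Set Attr)) : Prop :=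
  ∀ R : Rel,
    ((chain R).Pairwise fun a b => a.1 ⊂ b.1) ∧
    (∀ xy ∈ chain R, (xy.2 : Set Attr).Nonempty) ∧
    (∀ xy ∈ chain R, ∀ xy' ∈ chain R, xy.1 ∩ xy'.2 = ∅) ∧
    ((chain R).Pairwise fun a b => a.2 ∩ b.2 = ∅)

/-- The set of FDs induced by a chain. -/
def chainFDs (chain : Rel → List (Set Attr × Set Attr)) : Set (DBFD Rel Attr) :=
  {φ | ∃ xy ∈ chain φ.rel, φ.lhs = xy.1 ∧ φ.rhs = xy.2}

/-- The `i`-th FD of the chain `L` has some attribute carrying a variable in atom `α`. -/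
def chainVarAt (L : List (Set Attr × Set Attr)) (α : DBAtom Rel Attr Var Const) (i : ℕ) :
    Prop :=
  ∃ xy, L[i]? = some xy ∧ ∃ A ∈ xy.1 ∪ xy.2, ∃ v, α.val A = DBTerm.var v

/-- The index of the primary FD of the chain `L` w.r.t. the atom `α` (if it exists):
the first FD some of whose attributes carries a variable in `α`. -/
noncomputable def primaryIdx (L : List (Set Attr × Set Attr))
    (α : DBAtom Rel Attr Var Const) : Option ℕ :=
  if h : ∃ i, chainVarAt L α i then some (Nat.find h) else none

/-- The primary FD of the chain `L` w.r.t. the atom `α` (if it exists). -/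
noncomputable def primaryFD (L : List (Set Attr × Set Attr))
    (α : DBAtom Rel Attr Var Const) : Option (Set Attr × Set Attr) :=
  (primaryIdx L α).bind fun i => L[i]?

/-- The primary prefix of the chain `L` w.r.t. the atom `α`: the FDs strictly before the
primary FD, or the whole chain if there is no primary FD. -/
noncomputable def primaryPrefix (L : List (Set Attr × Set Attr))
    (α : DBAtom Rel Attr Var Const) : List (Set Attr × Set Attr) :=
  L.take ((primaryIdx L α).getD L.length)

/-- The primary-lhs positions (attributes) of the atom `α` w.r.t. the chain `L`. -/
noncomputable def primaryLhs (L : List (Set Attr × Set Attr))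
    (α : DBAtom Rel Attr Var Const) : Set Attr :=
  match primaryFD L α with
  | some xy => xy.1
  | none => Set.univ

/-- The variables of `α` occurring at primary-lhs positions. -/
noncomputable def pvar (L : List (Set Attr × Set Attr))
    (α : DBAtom Rel Attr Var Const) : Set Var :=
  {v | ∃ A ∈ primaryLhs L α, α.val A = DBTerm.var v}

/-- A liaison variable of `Q`: a variable with more than one occurrence in `Q`. -/
def liaison (Q : Finset (DBAtom Rel Attr Var Const)) (v : Var) : Prop :=
  ∃ α ∈ Q, ∃ β ∈ Q, ∃ A B, α.val A = DBTerm.var v ∧ β.val B = DBTerm.var v ∧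
    (α ≠ β ∨ A ≠ B)

/-- The complex part `comp(Q,Σ)` of `Q` w.r.t. the chain. -/
noncomputable def compPart (chain : Rel → List (Set Attr × Set Attr))
    (Q : Finset (DBAtom Rel Attr Var Const)) : Finset (DBAtom Rel Attr Var Const) :=
  Q.filter fun α => ∃ A, A ∉ primaryLhs (chain α.rel) α ∧
    ((∃ c, α.val A = DBTerm.const c) ∨ ∃ v, α.val A = DBTerm.var v ∧ liaison Q v) ∧
    ∀ xy ∈ primaryPrefix (chain α.rel) α, A ∉ xy.1 ∪ xy.2

/-- The fact `f` agrees with the atom `α` at attribute `A`, i.e. `α[A]` is the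
constant `f[A]`. -/
def agreesAt (f : DBFact Rel Attr Const) (α : DBAtom Rel Attr Var Const) (A : Attr) : Prop :=
  α.val A = DBTerm.const (f.val A)

/-- `D_conf^{Σ,Q}`: the facts of `D` conflicting with `Q` via an FD of the primary prefix. -/
noncomputable def dconf (chain : Rel → List (Set Attr × Set Attr))
    (Q : Finset (DBAtom Rel Attr Var Const)) (D : Finset (DBFact Rel Attr Const)) :
    Finset (DBFact Rel Attr Const) :=
  D.filter fun f => ∃ α ∈ Q, α.rel = f.rel ∧
    ∃ xy ∈ primaryPrefix (chain α.rel) α,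
      (∀ A ∈ xy.1, agreesAt f α A) ∧ ∃ B ∈ xy.2, ¬ agreesAt f α B

/-- `D_ind^{Σ,Q}`: the facts of `D \ D_conf^{Σ,Q}` disagreeing with `Q` on the lhs of an
FD of the primary prefix. -/
noncomputable def dind (chain : Rel → List (Set Attr × Set Attr))
    (Q : Finset (DBAtom Rel Attr Var Const)) (D : Finset (DBFact Rel Attr Const)) :
    Finset (DBFact Rel Attr Const) :=
  (D \ dconf chain Q D).filter fun f => ∃ α ∈ Q, α.rel = f.rel ∧
    ∃ xy ∈ primaryPrefix (chain α.rel) α, ∃ A ∈ xy.1, ¬ agreesAt f α A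

/-- The active domain of `D`: the constants occurring in `D`. -/
noncomputable def adom [Fintype Attr] (D : Finset (DBFact Rel Attr Const)) : Finset Const :=
  D.biUnion fun f => Finset.univ.image f.val

/-- Substituting a constant for a variable in a term. -/
noncomputable def substTerm (x : Var) (c : Const) : DBTerm Var Const → DBTerm Var Const
  | DBTerm.var v => if v = x then DBTerm.const c else DBTerm.var v
  | DBTerm.const d => DBTerm.const d

/-- Substituting a constant for a variable in an atom. -/
noncomputable def substAtom (x : Var) (c : Const) (α : DBAtom Rel Attr Var Const) :
    DBAtom Rel Attr Var Const :=
  ⟨α.rel, fun A => substTerm x c (α.val A)⟩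

/-- `Q_{x↦c}`: the query obtained from `Q` by replacing the variable `x` with `c`. -/
noncomputable def substQ (x : Var) (c : Const) (Q : Finset (DBAtom Rel Attr Var Const)) :
    Finset (DBAtom Rel Attr Var Const) :=
  Q.image (substAtom x c)

/-- The variables occurring in `Q`. -/
def qvars (Q : Finset (DBAtom Rel Attr Var Const)) : Set Var :=
  {v | ∃ α ∈ Q, ∃ A, α.val A = DBTerm.var v}

/-- `S` has an LHS chain: the left-hand sides of FDs over the same relation are
⊆-comparable. -/
def hasLHSChain (S : Set (DBFD Rel Attr)) : Prop :=
  ∀ φ ∈ S, ∀ ψ ∈ S, φ.rel = ψ.rel → φ.lhs ⊆ ψ.lhs ∨ ψ.lhs ⊆ φ.lhs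


section AuxProofs

variable {Rel Attr Var Const : Type*}

lemma satFDs_mono {S : Set (DBFD Rel Attr)} {E F : Finset (DBFact Rel Attr Const)}
    (hEF : E ⊆ F) (h : satFDs F S) : satFDs E S :=
  fun φ hφ f hf g hg => h φ hφ f (hEF hf) g (hEF hg)

lemma entails_mono {E F : Finset (DBFact Rel Attr Const)}
    {Q : Finset (DBAtom Rel Attr Var Const)} (hEF : E ⊆ F) :
    entails E Q → entails F Q := fun ⟨h, hh⟩ => ⟨h, fun α hα => hEF (hh α hα)⟩

lemma mem_rep {S : Set (DBFD Rel Attr)} {D E : Finset (DBFact Rel Attr Const)} :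
    E ∈ rep D S ↔ isRepair S D E := by
  simp only [rep, Finset.mem_filter, Finset.mem_powerset, and_iff_right_iff_imp]
  exact fun h => h.1

lemma rep_nonempty (D : Finset (DBFact Rel Attr Const)) (S : Set (DBFD Rel Attr)) :
    (rep D S).Nonempty := by
  classical
  have hne : (D.powerset.filter (fun E => satFDs E S)).Nonempty :=
    ⟨∅, Finset.mem_filter.mpr ⟨Finset.empty_mem_powerset _, by simp [satFDs, satFD]⟩⟩
  obtain ⟨m, hm, hmax⟩ := Finset.exists_maximal hne
  simp only [Finset.mem_filter, Finset.mem_powerset] at hm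
  refine ⟨m, mem_rep.mpr ⟨hm.1, hm.2, fun F hmF hFD hF => ?_⟩⟩
  by_contra hne'
  exact hne' (le_antisymm (hmax (Finset.mem_filter.mpr ⟨Finset.mem_powerset.mpr hFD, hF⟩) hmF) hmF)

lemma prefix_no_varAt {L : List (Set Attr × Set Attr)} {α : DBAtom Rel Attr Var Const}
    {j : ℕ} (hj : j < (primaryIdx L α).getD L.length) : ¬ chainVarAt L α j := by
  unfold primaryIdx at hj
  split at hj
  · next h => exact Nat.find_min h (by simpa using hj)
  · next h => exact fun hc => h ⟨j, hc⟩

lemma mem_prefix_idx {L : List (Set Attr × Set Attr)} {α : DBAtom Rel Attr Var Const}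
    {xy : Set Attr × Set Attr} (hxy : xy ∈ primaryPrefix L α) :
    ∃ j, j < (primaryIdx L α).getD L.length ∧ ∃ hj : j < L.length, L[j] = xy := by
  unfold primaryPrefix at hxy
  obtain ⟨j, hm, hval⟩ := List.mem_take_iff_getElem.mp hxy
  exact ⟨j, (lt_min_iff.mp hm).1, (lt_min_iff.mp hm).2, hval⟩

lemma idx_mem_prefix {L : List (Set Attr × Set Attr)} {α : DBAtom Rel Attr Var Const}
    {j : ℕ} (hjk : j < (primaryIdx L α).getD L.length) (hjl : j < L.length) :
    L[j] ∈ primaryPrefix L α := by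
  unfold primaryPrefix
  have hlen : j < (L.take ((primaryIdx L α).getD L.length)).length := by
    simp [List.length_take, hjk, hjl]
  have : (L.take ((primaryIdx L α).getD L.length))[j] = L[j] := List.getElem_take
  exact this ▸ List.getElem_mem hlen

lemma no_var_of_mem_prefix {L : List (Set Attr × Set Attr)} {α : DBAtom Rel Attr Var Const}
    {xy : Set Attr × Set Attr} (hxy : xy ∈ primaryPrefix L α) {A : Attr}
    (hA : A ∈ xy.1 ∪ xy.2) (v : Var) : α.val A ≠ DBTerm.var v := by
  intro hv
  obtain ⟨j, hjk, hjl, hLj⟩ := mem_prefix_idx hxy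
  exact prefix_no_varAt hjk ⟨xy, by rw [List.getElem?_eq_getElem hjl, hLj], A, hA, v, hv⟩

/-- Facts of `dind` are never homomorphic images of atoms of `Q`. -/
lemma not_image_dind {chain : Rel → List (Set Attr × Set Attr)}
    {Q : Finset (DBAtom Rel Attr Var Const)} (hsjf : sjf Q)
    {D : Finset (DBFact Rel Attr Const)} {f : DBFact Rel Attr Const}
    (hf : f ∈ dind chain Q D) {h : Var → Const} {α : DBAtom Rel Attr Var Const}
    (hα : α ∈ Q) : applyHom h α ≠ f := by
  intro heq
  simp only [dind, Finset.mem_filter] at hf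
  obtain ⟨α', hα'Q, hα'rel, xy, hxy, A, hA, hnag⟩ := hf.2
  have hrel : α.rel = α'.rel := by
    have : (applyHom h α).rel = α.rel := rfl
    rw [heq] at this; rw [← this, hα'rel]
  have hαα' : α = α' := hsjf α hα α' hα'Q hrel
  subst hαα'
  have hnv := no_var_of_mem_prefix hxy (Set.mem_union_left _ hA)
  apply hnag
  cases hc : α.val A with
  | var v => exact absurd hc (hnv v)
  | const c =>
    have : f.val A = c := by
      rw [← heq]; show (match α.val A with
        | DBTerm.var v => h v | DBTerm.const c => c) = c
      rw [hc]
    unfold agreesAt; rw [hc, this]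

/-- The key combinatorial lemma: a fact outside `dconf ∪ dind` never conflicts with a
fact of `dind` on any FD of the chain. -/
lemma cross_no_conflict {chain : Rel → List (Set Attr × Set Attr)}
    (hchain : canonicalChain chain) {Q : Finset (DBAtom Rel Attr Var Const)}
    {D : Finset (DBFact Rel Attr Const)} {φ : DBFD Rel Attr} (hφ : φ ∈ chainFDs chain)
    {x : DBFact Rel Attr Const} (hx : x ∈ D \ (dconf chain Q D ∪ dind chain Q D))
    {f : DBFact Rel Attr Const} (hf : f ∈ dind chain Q D)
    (hxr : x.rel = φ.rel) (hfr : f.rel = φ.rel)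
    (hlhs : ∀ A ∈ φ.lhs, x.val A = f.val A) : ∀ A ∈ φ.rhs, x.val A = f.val A := by
  classical
  obtain ⟨xym, hxymmem, hl, hr⟩ := hφ
  simp only [Finset.mem_sdiff, Finset.mem_union, not_or] at hx
  obtain ⟨hxD, hxC, hxI⟩ := hx
  simp only [dind, Finset.mem_filter, Finset.mem_sdiff] at hf
  obtain ⟨⟨hfD, hfC⟩, α, hαQ, hαrel, xyj, hxyj, A0, hA0, hnag⟩ := hf
  -- relation names all agree
  have hαφ : α.rel = φ.rel := by rw [hαrel, hfr]
  have hαx : α.rel = x.rel := by rw [hαφ, hxr]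
  set L := chain α.rel with hL
  -- x is not in dind: it agrees with α on every lhs of the primary prefix
  have hxAll : ∀ xy ∈ primaryPrefix L α, ∀ A ∈ xy.1, agreesAt x α A := by
    intro xy hxy A hA
    by_contra hno
    exact hxI (by
      simp only [dind, Finset.mem_filter, Finset.mem_sdiff]
      exact ⟨⟨hxD, hxC⟩, α, hαQ, hαx, xy, hxy, A, hA, hno⟩)
  -- x and f disagree at A0
  have hA0x : agreesAt x α A0 := hxAll xyj hxyj A0 hA0
  have hne : x.val A0 ≠ f.val A0 := by
    intro he
    exact hnag (by unfold agreesAt at hA0x ⊢; rw [hA0x, he])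
  obtain ⟨j, hjk, hjl, hLj⟩ := mem_prefix_idx hxyj
  have hxymL : xym ∈ L := by rw [hL, hαφ]; exact hxymmem
  obtain ⟨m, hml, hLm⟩ := List.mem_iff_getElem.mp hxymL
  have hpair := (List.pairwise_iff_getElem.mp (hchain α.rel).1)
  rcases Nat.lt_trichotomy m j with hmj | hmj | hmj
  · -- the good case: xym is in the primary prefix
    have hxymPfx : xym ∈ primaryPrefix L α := hLm ▸ idx_mem_prefix (hmj.trans hjk) hml
    have hagXm : ∀ A ∈ xym.1, agreesAt x α A := hxAll xym hxymPfx
    have hagFm : ∀ A ∈ xym.1, agreesAt f α A := by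
      intro A hA
      have h1 := hagXm A hA
      have h2 := hlhs A (hl ▸ hA)
      unfold agreesAt at h1 ⊢; rw [h1, h2]
    -- x and f not in dconf: they agree with α on xym.2 as well
    have notconf : ∀ (y : DBFact Rel Attr Const), y ∈ D → y ∉ dconf chain Q D →
        y.rel = φ.rel → (∀ A ∈ xym.1, agreesAt y α A) → ∀ B ∈ xym.2, agreesAt y α B := by
      intro y hyD hyC hyr hag B hB
      by_contra hno
      exact hyC (by
        simp only [dconf, Finset.mem_filter]
        exact ⟨hyD, α, hαQ, by rw [hαφ, hyr], xym, hxymPfx, hag, B, hB, hno⟩)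
    have hFr := notconf f hfD hfC hfr hagFm
    have hXr := notconf x hxD hxC hxr hagXm
    intro A hA
    have h1 := hXr A (hr ▸ hA)
    have h2 := hFr A (hr ▸ hA)
    unfold agreesAt at h1 h2
    rw [h1] at h2
    exact (DBTerm.const.injEq _ _).mp h2
  · subst hmj
    exact absurd (hlhs A0 (by rw [hl, ← hLm, hLj]; exact hA0)) hne
  · have hsub : xyj.1 ⊂ xym.1 := by
      have := hpair j m hjl hml hmj
      rw [hLj, hLm] at this; exact this
    exact absurd (hlhs A0 (hl ▸ hsub.subset hA0)) hne

section Decomp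

variable {S : Set (DBFD Rel Attr)} {X Y : Finset (DBFact Rel Attr Const)}

/-- cross-compatibility hypothesis abbreviation -/
def crossOK (S : Set (DBFD Rel Attr)) (X Y : Finset (DBFact Rel Attr Const)) : Prop :=
  ∀ φ ∈ S, ∀ x ∈ X, ∀ y ∈ Y, x.rel = φ.rel → y.rel = φ.rel →
    (∀ A ∈ φ.lhs, x.val A = y.val A) → ∀ A ∈ φ.rhs, x.val A = y.val A

lemma satFDs_union_of (hc : crossOK S X Y) {Ex Ey : Finset (DBFact Rel Attr Const)}
    (hEx : Ex ⊆ X) (hEy : Ey ⊆ Y) (h1 : satFDs Ex S) (h2 : satFDs Ey S) :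
    satFDs (Ex ∪ Ey) S := by
  intro φ hφ f hf g hg hfr hgr hlhs A hA
  rcases Finset.mem_union.mp hf with hf' | hf' <;> rcases Finset.mem_union.mp hg with hg' | hg'
  · exact h1 φ hφ f hf' g hg' hfr hgr hlhs A hA
  · exact hc φ hφ f (hEx hf') g (hEy hg') hfr hgr hlhs A hA
  · exact (hc φ hφ g (hEx hg') f (hEy hf') hgr hfr (fun B hB => (hlhs B hB).symm) A hA).symm
  · exact h2 φ hφ f hf' g hg' hfr hgr hlhs A hA

lemma inter_union_left (hd : Disjoint X Y) {Ex Ey : Finset (DBFact Rel Attr Const)}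
    (hEx : Ex ⊆ X) (hEy : Ey ⊆ Y) : (Ex ∪ Ey) ∩ X = Ex := by
  ext a
  simp only [Finset.mem_inter, Finset.mem_union]
  constructor
  · rintro ⟨ha | ha, haX⟩
    · exact ha
    · exact absurd haX (Finset.disjoint_left.mp hd.symm (hEy ha))
  · exact fun ha => ⟨Or.inl ha, hEx ha⟩

lemma inter_union_right (hd : Disjoint X Y) {Ex Ey : Finset (DBFact Rel Attr Const)}
    (hEx : Ex ⊆ X) (hEy : Ey ⊆ Y) : (Ex ∪ Ey) ∩ Y = Ey := by
  have := inter_union_left hd.symm hEy hEx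
  rw [Finset.union_comm] at this; exact this

lemma inter_split {E : Finset (DBFact Rel Attr Const)} (hE : E ⊆ X ∪ Y) :
    (E ∩ X) ∪ (E ∩ Y) = E := by
  rw [← Finset.inter_union_distrib_left, Finset.inter_eq_left.mpr hE]

lemma repair_union_iff (hd : Disjoint X Y) (hc : crossOK S X Y)
    {E : Finset (DBFact Rel Attr Const)} (hE : E ⊆ X ∪ Y) :
    isRepair S (X ∪ Y) E ↔ isRepair S X (E ∩ X) ∧ isRepair S Y (E ∩ Y) := by
  constructor
  · rintro ⟨-, hsat, hmax⟩
    constructor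
    · refine ⟨Finset.inter_subset_right, satFDs_mono Finset.inter_subset_left hsat, ?_⟩
      intro F hEF hFX hF
      have hG : satFDs (F ∪ (E ∩ Y)) S :=
        satFDs_union_of hc hFX Finset.inter_subset_right hF
          (satFDs_mono Finset.inter_subset_left hsat)
      have hEG : E ⊆ F ∪ (E ∩ Y) := by
        conv_lhs => rw [← inter_split hE]
        exact Finset.union_subset_union hEF (le_refl _)
      have hGXY : F ∪ (E ∩ Y) ⊆ X ∪ Y :=
        Finset.union_subset_union hFX Finset.inter_subset_right
      have hGE := hmax _ hEG hGXY hG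
      have : (F ∪ (E ∩ Y)) ∩ X = F := inter_union_left hd hFX Finset.inter_subset_right
      rw [hGE] at this
      rw [← this]
    · refine ⟨Finset.inter_subset_right, satFDs_mono Finset.inter_subset_left hsat, ?_⟩
      intro F hEF hFY hF
      have hG : satFDs ((E ∩ X) ∪ F) S :=
        satFDs_union_of hc Finset.inter_subset_right hFY
          (satFDs_mono Finset.inter_subset_left hsat) hF
      have hEG : E ⊆ (E ∩ X) ∪ F := by
        conv_lhs => rw [← inter_split hE]
        exact Finset.union_subset_union (le_refl _) hEF
      have hGXY : (E ∩ X) ∪ F ⊆ X ∪ Y :=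
        Finset.union_subset_union Finset.inter_subset_right hFY
      have hGE := hmax _ hEG hGXY hG
      have : ((E ∩ X) ∪ F) ∩ Y = F := inter_union_right hd Finset.inter_subset_right hFY
      rw [hGE] at this
      rw [← this]
  · rintro ⟨⟨hX1, hX2, hX3⟩, hY1, hY2, hY3⟩
    refine ⟨hE, ?_, ?_⟩
    · have := satFDs_union_of hc hX1 hY1 hX2 hY2
      rwa [inter_split hE] at this
    · intro F hEF hFXY hF
      have hFX : E ∩ X ⊆ F ∩ X := Finset.inter_subset_inter hEF (le_refl _)
      have hFY : E ∩ Y ⊆ F ∩ Y := Finset.inter_subset_inter hEF (le_refl _)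
      have e1 : F ∩ X = E ∩ X :=
        hX3 _ hFX Finset.inter_subset_right (satFDs_mono Finset.inter_subset_left hF)
      have e2 : F ∩ Y = E ∩ Y :=
        hY3 _ hFY Finset.inter_subset_right (satFDs_mono Finset.inter_subset_left hF)
      rw [← inter_split hFXY, e1, e2, inter_split hE]

lemma rep_union_card_filter (hd : Disjoint X Y) (hc : crossOK S X Y)
    (p : Finset (DBFact Rel Attr Const) → Prop)
    (hp : ∀ E, isRepair S (X ∪ Y) E → (p E ↔ p (E ∩ X))) :
    ((rep (X ∪ Y) S).filter p).card = ((rep X S).filter p).card * (rep Y S).card := by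
  classical
  rw [← Finset.card_product]
  apply Finset.card_nbij' (fun E => (E ∩ X, E ∩ Y)) (fun b => b.1 ∪ b.2)
  · intro E hE
    simp only [Finset.mem_coe, Finset.mem_filter, Finset.mem_product] at hE ⊢
    obtain ⟨hrep, hpE⟩ := hE
    have hR := mem_rep.mp hrep
    have := (repair_union_iff hd hc hR.1).mp hR
    exact ⟨⟨mem_rep.mpr this.1, (hp E hR).mp hpE⟩, mem_rep.mpr this.2⟩
  · intro b hb
    simp only [Finset.mem_coe, Finset.mem_filter, Finset.mem_product] at hb ⊢
    obtain ⟨⟨hb1, hpb⟩, hb2⟩ := hb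
    have h1 := mem_rep.mp hb1
    have h2 := mem_rep.mp hb2
    have hsub : b.1 ∪ b.2 ⊆ X ∪ Y := Finset.union_subset_union h1.1 h2.1
    have e1 : (b.1 ∪ b.2) ∩ X = b.1 := inter_union_left hd h1.1 h2.1
    have e2 : (b.1 ∪ b.2) ∩ Y = b.2 := inter_union_right hd h1.1 h2.1
    have hrep : isRepair S (X ∪ Y) (b.1 ∪ b.2) :=
      (repair_union_iff hd hc hsub).mpr (by rw [e1, e2]; exact ⟨h1, h2⟩)
    exact ⟨mem_rep.mpr hrep, (hp _ hrep).mpr (by rwa [e1])⟩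
  · intro E hE
    simp only [Finset.mem_coe, Finset.mem_filter] at hE
    exact inter_split (mem_rep.mp hE.1).1
  · intro b hb
    simp only [Finset.mem_coe, Finset.mem_filter, Finset.mem_product] at hb
    have h1 := (mem_rep.mp hb.1.1).1
    have h2 := (mem_rep.mp hb.2).1
    exact Prod.ext (inter_union_left hd h1 h2) (inter_union_right hd h1 h2)

end Decomp

end AuxProofs

/-- For a canonical set of FDs with an LHS chain and an SJFCQ `Q`,
`rfreq(Q, D \ D_conf, Σ) = rfreq(Q, D \ (D_conf ∪ D_ind), Σ)`. -/
theorem stmt_5 {Rel Attr Var Const : Type*}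
    (chain : Rel → List (Set Attr × Set Attr)) (hchain : canonicalChain chain)
    (Q : Finset (DBAtom Rel Attr Var Const)) (hQne : Q.Nonempty) (hsjf : sjf Q)
    (D : Finset (DBFact Rel Attr Const)) :
    rfreq Q (D \ dconf chain Q D) (chainFDs chain) =
      rfreq Q (D \ (dconf chain Q D ∪ dind chain Q D)) (chainFDs chain) := by
  classical
  set S := chainFDs chain with hS
  set C := dconf chain Q D with hC
  set I := dind chain Q D with hI
  set X := D \ (C ∪ I) with hX
  have hIsub : I ⊆ D \ C := Finset.filter_subset _ _
  have hXY : X ∪ I = D \ C := by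
    ext a
    simp only [hX, Finset.mem_union, Finset.mem_sdiff, Finset.mem_union, not_or]
    constructor
    · rintro (⟨haD, hn1, hn2⟩ | haI)
      · exact ⟨haD, hn1⟩
      · exact Finset.mem_sdiff.mp (hIsub haI)
    · rintro ⟨haD, haC⟩
      by_cases haI : a ∈ I
      · exact Or.inr haI
      · exact Or.inl ⟨haD, haC, haI⟩
  have hd : Disjoint X I := by
    refine Finset.disjoint_left.mpr ?_
    intro a haX haI
    exact (Finset.mem_sdiff.mp haX).2 (Finset.mem_union_right _ haI)
  have hc : crossOK S X I := fun φ hφ x hx y hy =>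
    cross_no_conflict hchain hφ hx hy
  have hp1 : ∀ E, isRepair S (X ∪ I) E → (entails E Q ↔ entails (E ∩ X) Q) := by
    intro E hrep
    constructor
    · rintro ⟨h, hh⟩
      refine ⟨h, fun α hα => Finset.mem_inter.mpr ⟨hh α hα, ?_⟩⟩
      rcases Finset.mem_union.mp (hrep.1 (hh α hα)) with h' | h'
      · exact h'
      · exact absurd rfl (not_image_dind hsjf h' hα)
    · exact entails_mono Finset.inter_subset_left
  have c1 := rep_union_card_filter hd hc (fun E => entails E Q) hp1
  have c2 := rep_union_card_filter hd hc (fun _ => True) (fun _ _ => Iff.rfl)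
  simp only [Finset.filter_true] at c2
  have hcpos : ((rep I S).card : ℚ) ≠ 0 := by
    have := Finset.card_pos.mpr (rep_nonempty I S)
    exact_mod_cast this.ne'
  rw [← hXY]
  unfold rfreq repQ
  rw [c1, c2]
  push_cast
  rw [mul_div_mul_right _ _ hcpos]
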